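/- Any injective monoid homomorphism ξ : M → E which fixes every element of G pointwise also fixes every member of M, i.e. ξ(f) = f for all f ∈ M. -/

import Mathlib

def Mmon : Submonoid (Function.End ℚ) where
  carrier := {f | StrictMono f}
  mul_mem' := fun hf hg => hf.comp hg
  one_mem' := strictMono_id

def Emon : Submonoid (Function.End ℚ) where
  carrier := {f | Monotone f}
  mul_mem' := fun hf hg => hf.comp hg
  one_mem' := monotone_id

namespace FixAux

lemma end_mul_apply (u v : Function.End ℚ) (x : ℚ) : (u * v) x = u (v x) := rfl

/-- Piecewise-linear "bump": identity outside `(c,d)`, maps `u` to `v` inside. -/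
def bumpFun (c u v d : ℚ) : ℚ → ℚ := fun x =>
  if x ≤ c then x
  else if x ≤ u then c + (x - c) * ((v - c) / (u - c))
  else if x < d then d - (d - x) * ((d - v) / (d - u))
  else x

section Bump

variable {c u v d : ℚ} (hcu : c < u) (hud : u < d) (hcv : c < v) (hvd : v < d)

lemma bump_e1 {x : ℚ} (hx : x ≤ c) : bumpFun c u v d x = x := by
  simp [bumpFun, hx]

lemma bump_e2 {x : ℚ} (hx1 : c < x) (hx2 : x ≤ u) :
    bumpFun c u v d x = c + (x - c) * ((v - c) / (u - c)) := by
  simp [bumpFun, not_le.mpr hx1, hx2]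

lemma bump_e3 (hcu : c < u) {x : ℚ} (hx1 : u < x) (hx2 : x < d) :
    bumpFun c u v d x = d - (d - x) * ((d - v) / (d - u)) := by
  simp [bumpFun, not_le.mpr (lt_trans hcu hx1 : c < x), not_le.mpr hx1, hx2]

lemma bump_e4 (hcd : c < d) (hud : u < d) {x : ℚ} (hx : d ≤ x) : bumpFun c u v d x = x := by
  simp [bumpFun, not_le.mpr (lt_of_lt_of_le hcd hx : c < x),
    not_le.mpr (lt_of_lt_of_le hud hx : u < x), not_lt.mpr hx]

include hcu hcv in
lemma bump_B2 {x : ℚ} (hx1 : c < x) (hx2 : x ≤ u) :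
    c < bumpFun c u v d x ∧ bumpFun c u v d x ≤ v := by
  rw [bump_e2 hx1 hx2]
  have h1 : (0:ℚ) < u - c := sub_pos.mpr hcu
  have h2 : (0:ℚ) < v - c := sub_pos.mpr hcv
  have hr : (0:ℚ) < (v - c) / (u - c) := div_pos h2 h1
  have key : (u - c) * ((v - c) / (u - c)) = v - c := by field_simp
  constructor
  · nlinarith [mul_pos (sub_pos.mpr hx1) hr]
  · nlinarith [mul_le_mul_of_nonneg_right (show x - c ≤ u - c by linarith) (le_of_lt hr)]

include hcu hud hvd in
lemma bump_B3 {x : ℚ} (hx1 : u < x) (hx2 : x < d) :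
    v < bumpFun c u v d x ∧ bumpFun c u v d x < d := by
  rw [bump_e3 hcu hx1 hx2]
  have h3 : (0:ℚ) < d - u := sub_pos.mpr hud
  have h4 : (0:ℚ) < d - v := sub_pos.mpr hvd
  have hs : (0:ℚ) < (d - v) / (d - u) := div_pos h4 h3
  have key : (d - u) * ((d - v) / (d - u)) = d - v := by field_simp
  constructor
  · nlinarith [mul_lt_mul_of_pos_right (show d - x < d - u by linarith) hs]
  · nlinarith [mul_pos (sub_pos.mpr hx2) hs]

include hcu hud hcv hvd in
lemma bump_mono : StrictMono (bumpFun c u v d) := by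
  have hcd : c < d := lt_trans hcu hud
  have h1 : (0:ℚ) < u - c := sub_pos.mpr hcu
  have h2 : (0:ℚ) < v - c := sub_pos.mpr hcv
  have h3 : (0:ℚ) < d - u := sub_pos.mpr hud
  have h4 : (0:ℚ) < d - v := sub_pos.mpr hvd
  have hr : (0:ℚ) < (v - c) / (u - c) := div_pos h2 h1
  have hs : (0:ℚ) < (d - v) / (d - u) := div_pos h4 h3
  intro x y hxy
  rcases le_or_gt x c with hx1 | hx1
  · rw [bump_e1 hx1]
    rcases le_or_gt y c with hy1 | hy1
    · rw [bump_e1 hy1]; exact hxy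
    rcases le_or_gt y u with hy2 | hy2
    · exact lt_of_le_of_lt hx1 (bump_B2 hcu hcv hy1 hy2).1
    rcases lt_or_ge y d with hy3 | hy3
    · exact lt_of_le_of_lt hx1 (lt_trans hcv (bump_B3 hcu hud hvd hy2 hy3).1)
    · rw [bump_e4 hcd hud hy3]; exact hxy
  rcases le_or_gt x u with hx2 | hx2
  · rcases le_or_gt y u with hy2 | hy2
    · rw [bump_e2 hx1 hx2, bump_e2 (lt_trans hx1 hxy) hy2]
      have := mul_lt_mul_of_pos_right (show x - c < y - c by linarith) hr
      linarith
    rcases lt_or_ge y d with hy3 | hy3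
    · exact lt_of_le_of_lt (bump_B2 hcu hcv hx1 hx2).2 (bump_B3 hcu hud hvd hy2 hy3).1
    · rw [bump_e4 hcd hud hy3]
      exact lt_of_le_of_lt (bump_B2 hcu hcv hx1 hx2).2 (lt_of_lt_of_le hvd hy3)
  rcases lt_or_ge x d with hx3 | hx3
  · rcases lt_or_ge y d with hy3 | hy3
    · rw [bump_e3 hcu hx2 hx3, bump_e3 hcu (lt_trans hx2 hxy) hy3]
      have := mul_lt_mul_of_pos_right (show d - y < d - x by linarith) hs
      linarith
    · rw [bump_e4 hcd hud hy3]
      exact lt_of_lt_of_le (bump_B3 hcu hud hvd hx2 hx3).2 hy3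
  · rw [bump_e4 hcd hud hx3, bump_e4 hcd hud (le_of_lt (lt_of_le_of_lt hx3 hxy))]
    exact hxy

include hcu hud hcv hvd in
lemma bump_surj : Function.Surjective (bumpFun c u v d) := by
  have hcd : c < d := lt_trans hcu hud
  have h1 : (0:ℚ) < u - c := sub_pos.mpr hcu
  have h2 : (0:ℚ) < v - c := sub_pos.mpr hcv
  have h3 : (0:ℚ) < d - u := sub_pos.mpr hud
  have h4 : (0:ℚ) < d - v := sub_pos.mpr hvd
  intro y
  rcases le_or_gt y c with hy1 | hy1
  · exact ⟨y, bump_e1 hy1⟩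
  rcases le_or_gt y v with hy2 | hy2
  · refine ⟨c + (y - c) * ((u - c) / (v - c)), ?_⟩
    have hrr : (0:ℚ) < (u - c) / (v - c) := div_pos h1 h2
    have hxa : c < c + (y - c) * ((u - c) / (v - c)) := by
      nlinarith [mul_pos (sub_pos.mpr hy1) hrr]
    have hxb : c + (y - c) * ((u - c) / (v - c)) ≤ u := by
      have key : (v - c) * ((u - c) / (v - c)) = u - c := by field_simp
      nlinarith [mul_le_mul_of_nonneg_right (show y - c ≤ v - c by linarith) (le_of_lt hrr)]
    rw [bump_e2 hxa hxb]
    field_simp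
    ring
  rcases lt_or_ge y d with hy3 | hy3
  · refine ⟨d - (d - y) * ((d - u) / (d - v)), ?_⟩
    have hss : (0:ℚ) < (d - u) / (d - v) := div_pos h3 h4
    have hxb : d - (d - y) * ((d - u) / (d - v)) < d := by
      nlinarith [mul_pos (sub_pos.mpr hy3) hss]
    have hxa : u < d - (d - y) * ((d - u) / (d - v)) := by
      have key : (d - v) * ((d - u) / (d - v)) = d - u := by field_simp
      nlinarith [mul_lt_mul_of_pos_right (show d - y < d - v by linarith) hss]
    rw [bump_e3 hcu hxa hxb]
    field_simp
    ring
  · exact ⟨y, bump_e4 hcd hud hy3⟩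

lemma bump_u (hcu : c < u) (hcv : c < v) : bumpFun c u v d u = v := by
  rw [bump_e2 hcu le_rfl]
  have h1 : (u - c) ≠ 0 := ne_of_gt (sub_pos.mpr hcu)
  field_simp
  ring

/-- The bump as an element of `Mmon`, bijective, fixing everything outside `(c,d)`. -/
lemma bump_exists (c u v d : ℚ) (hcu : c < u) (hud : u < d) (hcv : c < v) (hvd : v < d) :
    ∃ g : Mmon, Function.Bijective (g : Function.End ℚ) ∧
      (g : Function.End ℚ) u = v ∧
      (∀ x : ℚ, ¬(c < x ∧ x < d) → (g : Function.End ℚ) x = x) := by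
  refine ⟨⟨bumpFun c u v d, bump_mono hcu hud hcv hvd⟩,
    ⟨(bump_mono hcu hud hcv hvd).injective, bump_surj hcu hud hcv hvd⟩,
    bump_u hcu hcv, ?_⟩
  intro x hx
  rcases le_or_gt x c with h | h
  · exact bump_e1 h
  · have : d ≤ x := by
      by_contra hh
      exact hx ⟨h, not_le.mp hh⟩
    exact bump_e4 (lt_trans hcu hud) hud this

end Bump
section Xi

variable (ξ : Mmon →* Emon) (hinj : Function.Injective ξ)
  (hfix : ∀ f : Mmon, Function.Bijective (f : Function.End ℚ) →
      (ξ f : Function.End ℚ) = (f : Function.End ℚ))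

include hinj hfix in
lemma xi_injective (w : Mmon) : Function.Injective ((ξ w : Emon) : Function.End ℚ) := by
  set F : ℚ → ℚ := ((ξ w : Emon) : Function.End ℚ) with hFdef
  have hmono : Monotone F := (ξ w).2
  have hw : StrictMono (w : Function.End ℚ) := w.2
  have key : ∀ x y : ℚ, x < y → F x = F y → False := by
    intro x y hlt heq
    have hconst : ∀ p, x ≤ p → p ≤ y → F p = F x := by
      intro p h1 h2
      refine le_antisymm ?_ (hmono h1)
      rw [heq]; exact hmono h2
    obtain ⟨g, hgbij, hgu, hgout⟩ := bump_exists x (x + (y - x)/3) (x + (y - x)*2/3) y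
      (by linarith) (by linarith) (by linarith) (by linarith)
    have hgm : StrictMono (g : Function.End ℚ) := g.2
    have hgx : (g : Function.End ℚ) x = x := hgout x (by simp)
    have hgy : (g : Function.End ℚ) y = y := hgout y (by simp)
    have hcomp : ξ (w * g) = ξ w := by
      rw [map_mul]
      apply Subtype.ext
      rw [Submonoid.coe_mul, hfix g hgbij]
      funext p
      show F ((g : Function.End ℚ) p) = F p
      by_cases hp : x < p ∧ p < y
      · have h1 : x < (g : Function.End ℚ) p := by
          conv_lhs => rw [← hgx]
          exact hgm hp.1
        have h2 : (g : Function.End ℚ) p < y := by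
          conv_rhs => rw [← hgy]
          exact hgm hp.2
        rw [hconst _ (le_of_lt h1) (le_of_lt h2), hconst _ (le_of_lt hp.1) (le_of_lt hp.2)]
      · rw [hgout p hp]
    have hwg : w * g = w := hinj hcomp
    have h5 : (w : Function.End ℚ) ((g : Function.End ℚ) (x + (y - x)/3))
        = (w : Function.End ℚ) (x + (y - x)/3) := by
      exact congrFun (congrArg Subtype.val hwg) (x + (y - x)/3)
    have h6 := hw.injective h5
    rw [hgu] at h6
    linarith
  intro p q hpq
  rcases lt_trichotomy p q with h | h | h
  · exact absurd hpq (fun hh => key p q h hh)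
  · exact h
  · exact absurd hpq (fun hh => key q p h hh.symm)

include hinj hfix in
lemma pin_interval (n : Mmon) (a b x₀ : ℚ) (hax : a < x₀) (hxb : x₀ < b)
    (hid : ∀ x, a < x → x < b → (n : Function.End ℚ) x = x)
    (hlo : ∀ x, x ≤ a → (n : Function.End ℚ) x ≤ a)
    (hhi : ∀ x, b ≤ x → b ≤ (n : Function.End ℚ) x) :
    ((ξ n : Emon) : Function.End ℚ) x₀ = x₀ := by
  set F : ℚ → ℚ := ((ξ n : Emon) : Function.End ℚ) with hFdef
  have hcomm : ∀ g : Mmon, Function.Bijective (g : Function.End ℚ) →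
      (∀ x : ℚ, ¬(a < x ∧ x < b) → (g : Function.End ℚ) x = x) →
      ∀ p : ℚ, F ((g : Function.End ℚ) p) = (g : Function.End ℚ) (F p) := by
    intro g hgbij hgout p
    have hgm : StrictMono (g : Function.End ℚ) := g.2
    have hga : (g : Function.End ℚ) a = a := hgout a (by simp)
    have hgb : (g : Function.End ℚ) b = b := hgout b (by simp)
    have hng : n * g = g * n := by
      apply Subtype.ext
      rw [Submonoid.coe_mul, Submonoid.coe_mul]
      funext q
      show (n : Function.End ℚ) ((g : Function.End ℚ) q)
          = (g : Function.End ℚ) ((n : Function.End ℚ) q)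
      rcases le_or_gt q a with hq | hq
      · rw [hgout q (fun hh => absurd hq (not_le.mpr hh.1)),
          hgout _ (fun hh => absurd (hlo q hq) (not_le.mpr hh.1))]
      rcases lt_or_ge q b with hqb | hqb
      · have h1 : a < (g : Function.End ℚ) q := by
          conv_lhs => rw [← hga]
          exact hgm hq
        have h2 : (g : Function.End ℚ) q < b := by
          conv_rhs => rw [← hgb]
          exact hgm hqb
        rw [hid _ h1 h2, hid _ hq hqb]
      · rw [hgout q (fun hh => absurd hqb (not_le.mpr hh.2)),
          hgout _ (fun hh => absurd (hhi q hqb) (not_le.mpr hh.2))]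
    have h2 : ξ n * ξ g = ξ g * ξ n := by rw [← map_mul, ← map_mul, hng]
    have h3 := congrArg Subtype.val h2
    rw [Submonoid.coe_mul, Submonoid.coe_mul, hfix g hgbij] at h3
    exact congrFun h3 p
  by_contra hne
  by_cases hta : a < F x₀ ∧ F x₀ < b
  · rcases lt_or_gt_of_ne hne with hlt | hgt
    · obtain ⟨g, hgbij, hgu, hgout⟩ := bump_exists a (F x₀) ((a + F x₀)/2) x₀
        hta.1 hlt (by linarith [hta.1]) (by linarith)
      have hcp := hcomm g hgbij (fun x hx => hgout x (fun hh => hx ⟨hh.1, lt_trans hh.2 hxb⟩))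
      have hev := hcp x₀
      rw [hgout x₀ (by simp), hgu] at hev
      have := hta.1
      linarith
    · obtain ⟨g, hgbij, hgu, hgout⟩ := bump_exists x₀ (F x₀) ((F x₀ + b)/2) b
        hgt hta.2 (by linarith [hta.2]) (by linarith)
      have hcp := hcomm g hgbij (fun x hx => hgout x (fun hh => hx ⟨lt_trans hax hh.1, hh.2⟩))
      have hev := hcp x₀
      rw [hgout x₀ (by simp), hgu] at hev
      have := hta.2
      linarith
  · obtain ⟨g, hgbij, hgu, hgout⟩ := bump_exists a x₀ ((a + x₀)/2) b hax hxb
      (by linarith) (by linarith)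
    have hcp := hcomm g hgbij hgout
    have hev := hcp x₀
    rw [hgu, hgout (F x₀) hta] at hev
    have h7 := xi_injective ξ hinj hfix n hev
    linarith

include hinj hfix in
lemma pin_point (m : Mmon) (a b x₀ : ℚ) (hax : a < x₀) (hxb : x₀ < b)
    (hm : ∀ x : ℚ, x ≤ a ∨ x = x₀ ∨ b ≤ x → (m : Function.End ℚ) x = x) :
    ((ξ m : Emon) : Function.End ℚ) x₀ = x₀ := by
  have hs2 : (0:ℝ) < Real.sqrt 2 := Real.sqrt_pos.mpr (by norm_num)
  set α : ℝ := (a : ℝ) - Real.sqrt 2 with hαdef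
  set β : ℝ := (b : ℝ) + Real.sqrt 2 with hβdef
  have hαa : α < (a:ℝ) := by rw [hαdef]; linarith
  have hbβ : (b:ℝ) < β := by rw [hβdef]; linarith
  have hαirr : Irrational α := irrational_sqrt_two.ratCast_sub a
  have hβirr : Irrational β := irrational_sqrt_two.ratCast_add b
  have hax' : (a:ℝ) < (x₀:ℝ) := by exact_mod_cast hax
  have hxb' : (x₀:ℝ) < (b:ℝ) := by exact_mod_cast hxb
  have hαx : α < (x₀:ℝ) := lt_trans hαa hax'
  have hxβ : (x₀:ℝ) < β := lt_trans hxb' hbβ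
  set W : Set ℚ := {q : ℚ | (q:ℝ) < α ∨ q = x₀ ∨ β < (q:ℝ)} with hWdef
  have hx₀W : x₀ ∈ W := Or.inr (Or.inl rfl)
  haveI : Nonempty W := ⟨⟨x₀, hx₀W⟩⟩
  haveI : DenselyOrdered W := by
    constructor
    rintro ⟨p, hp⟩ ⟨q, hq⟩ hpq
    have hpq' : p < q := Subtype.mk_lt_mk.mp hpq
    rcases hq with hq | hq | hq
    · obtain ⟨r, hr1, hr2⟩ := exists_between hpq'
      have hrW : r ∈ W := Or.inl (lt_trans (by exact_mod_cast hr2 : (r:ℝ) < (q:ℝ)) hq)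
      exact ⟨⟨r, hrW⟩, Subtype.mk_lt_mk.mpr hr1, Subtype.mk_lt_mk.mpr hr2⟩
    · rcases hp with hp | hp | hp
      · obtain ⟨r, hr1, hr2⟩ := exists_rat_btwn hp
        refine ⟨⟨r, Or.inl hr2⟩, Subtype.mk_lt_mk.mpr (by exact_mod_cast hr1),
          Subtype.mk_lt_mk.mpr ?_⟩
        rw [hq]
        exact_mod_cast lt_trans hr2 hαx
      · exfalso; rw [hp, hq] at hpq'; exact lt_irrefl _ hpq'
      · exfalso
        rw [hq] at hpq'
        have h1 : (p:ℝ) < (x₀:ℝ) := by exact_mod_cast hpq'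
        linarith [lt_trans h1 hxβ]
    · by_cases hpb : β < (p:ℝ)
      · obtain ⟨r, hr1, hr2⟩ := exists_between hpq'
        have hrW : r ∈ W := Or.inr (Or.inr (lt_trans hpb (by exact_mod_cast hr1)))
        exact ⟨⟨r, hrW⟩, Subtype.mk_lt_mk.mpr hr1, Subtype.mk_lt_mk.mpr hr2⟩
      · obtain ⟨r, hr1, hr2⟩ := exists_rat_btwn (show β < (q:ℝ) from hq)
        refine ⟨⟨r, Or.inr (Or.inr hr1)⟩, Subtype.mk_lt_mk.mpr ?_, Subtype.mk_lt_mk.mpr ?_⟩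
        · exact_mod_cast lt_of_le_of_lt (not_lt.mp hpb) hr1
        · exact_mod_cast hr2
  haveI : NoMinOrder W := by
    constructor; rintro ⟨p, hp⟩
    obtain ⟨r, hr⟩ := exists_rat_lt (min α (p:ℝ))
    refine ⟨⟨r, Or.inl (lt_of_lt_of_le hr (min_le_left _ _))⟩, Subtype.mk_lt_mk.mpr ?_⟩
    exact_mod_cast lt_of_lt_of_le hr (min_le_right _ _)
  haveI : NoMaxOrder W := by
    constructor; rintro ⟨p, hp⟩
    obtain ⟨r, hr⟩ := exists_rat_gt (max β (p:ℝ))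
    refine ⟨⟨r, Or.inr (Or.inr (lt_of_le_of_lt (le_max_left _ _) hr))⟩, Subtype.mk_lt_mk.mpr ?_⟩
    exact_mod_cast lt_of_le_of_lt (le_max_right _ _) hr
  obtain ⟨iso⟩ := Order.iso_of_countable_dense ℚ W
  have hwmono : StrictMono (fun q : ℚ => ((iso q : W) : ℚ)) := by
    intro p q h
    exact Subtype.coe_lt_coe.mpr (iso.strictMono h)
  set w : Mmon := (⟨fun q : ℚ => ((iso q : W) : ℚ), hwmono⟩ : Mmon) with hwdef2
  have hwmem : ∀ q : ℚ, (w : Function.End ℚ) q ∈ W := fun q => (iso q).2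
  have hwinj : Function.Injective (w : Function.End ℚ) := hwmono.injective
  -- Step 1 : ξ w = w pointwise
  have hPhiW : ∀ x : ℚ, ((ξ w : Emon) : Function.End ℚ) x = (w : Function.End ℚ) x := by
    intro x
    obtain ⟨y, hy⟩ : ∃ y, (w : Function.End ℚ) x = y := ⟨_, rfl⟩
    obtain ⟨z, hz⟩ : ∃ z, ((ξ w : Emon) : Function.End ℚ) x = z := ⟨_, rfl⟩
    rw [hy, hz]
    by_contra hzy
    have hyW : y ∈ W := hy ▸ hwmem x
    -- generic argument: for any W-compatible bijection g, g fixes y iff g fixes z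
    have hGen : ∀ g : Mmon, Function.Bijective (g : Function.End ℚ) →
        (∀ p : ℚ, p ∈ W → (g : Function.End ℚ) p ∈ W) →
        (∀ p : ℚ, (g : Function.End ℚ) p ∈ W → p ∈ W) →
        ((g : Function.End ℚ) y = y ↔ (g : Function.End ℚ) z = z) := by
      intro g hgbij hg1 hg2
      have hgm : StrictMono (g : Function.End ℚ) := g.2
      have hhmono : StrictMono (fun q : ℚ =>
          ((iso.symm ⟨(g : Function.End ℚ) ((w : Function.End ℚ) q), hg1 _ (hwmem q)⟩) : ℚ)) := by
        intro p q hpq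
        exact iso.symm.strictMono (Subtype.mk_lt_mk.mpr (hgm (hwmono hpq)))
      set h : Mmon := (⟨fun q : ℚ =>
          ((iso.symm ⟨(g : Function.End ℚ) ((w : Function.End ℚ) q), hg1 _ (hwmem q)⟩) : ℚ),
          hhmono⟩ : Mmon) with hhdef
      have hwh : ∀ q : ℚ, (w : Function.End ℚ) ((h : Function.End ℚ) q)
          = (g : Function.End ℚ) ((w : Function.End ℚ) q) := by
        intro q
        exact congrArg Subtype.val
          (iso.apply_symm_apply ⟨(g : Function.End ℚ) ((w : Function.End ℚ) q), hg1 _ (hwmem q)⟩)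
      have hhbij : Function.Bijective (h : Function.End ℚ) := by
        refine ⟨hhmono.injective, ?_⟩
        intro r
        obtain ⟨p, hp⟩ := hgbij.2 ((w : Function.End ℚ) r)
        have hpW : p ∈ W := hg2 p (by rw [hp]; exact hwmem r)
        refine ⟨(iso.symm ⟨p, hpW⟩ : ℚ), ?_⟩
        apply hwinj
        rw [hwh]
        have hwq : (w : Function.End ℚ) ((iso.symm ⟨p, hpW⟩ : ℚ)) = p :=
          congrArg Subtype.val (iso.apply_symm_apply ⟨p, hpW⟩)
        rw [hwq, hp]
      have hrel : g * w = w * h := by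
        apply Subtype.ext
        rw [Submonoid.coe_mul, Submonoid.coe_mul]
        funext q
        show (g : Function.End ℚ) ((w : Function.End ℚ) q)
            = (w : Function.End ℚ) ((h : Function.End ℚ) q)
        rw [hwh]
      have hxi := congrArg ξ hrel
      rw [map_mul, map_mul] at hxi
      have hxi2 := congrArg Subtype.val hxi
      rw [Submonoid.coe_mul, Submonoid.coe_mul, hfix g hgbij, hfix h hhbij] at hxi2
      have hev0 := congrFun hxi2 x
      simp only [end_mul_apply] at hev0
      have hev : (g : Function.End ℚ) (((ξ w : Emon) : Function.End ℚ) x)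
          = ((ξ w : Emon) : Function.End ℚ) ((h : Function.End ℚ) x) := hev0
      rw [hz] at hev
      -- hev : g z = Φw (h x)
      constructor
      · intro hgy
        have hhx : (h : Function.End ℚ) x = x := by
          apply hwinj
          rw [hwh, hy, hgy, ← hy]
        rw [hhx, hz] at hev
        exact hev
      · intro hgz
        rw [hgz] at hev
        have hhx : (h : Function.End ℚ) x = x :=
          xi_injective ξ hinj hfix w (hev.symm.trans hz.symm)
        have := hwh x
        rw [hhx, hy] at this
        exact this.symm
    -- bump construction compatible with W
    have hbumpW : ∀ c d v zz : ℚ, c < zz → zz < d → c < v → v < d →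
        ((d:ℝ) < α ∨ β < (c:ℝ) ∨ (α < (c:ℝ) ∧ (d:ℝ) < β ∧ ¬(c < x₀ ∧ x₀ < d))) →
        ∃ g : Mmon, Function.Bijective (g : Function.End ℚ) ∧
          (g : Function.End ℚ) zz = v ∧
          (∀ p : ℚ, ¬(c < p ∧ p < d) → (g : Function.End ℚ) p = p) ∧
          (∀ p : ℚ, p ∈ W → (g : Function.End ℚ) p ∈ W) ∧
          (∀ p : ℚ, (g : Function.End ℚ) p ∈ W → p ∈ W) := by
      intro c d v zz h1 h2 h3 h4 hreg
      obtain ⟨g, hgbij, hgu, hgout⟩ := bump_exists c zz v d h1 h2 h3 h4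
      have hgm : StrictMono (g : Function.End ℚ) := g.2
      have hgc : (g : Function.End ℚ) c = c := hgout c (by simp)
      have hgd : (g : Function.End ℚ) d = d := hgout d (by simp)
      have hin : ∀ p : ℚ, c < p → p < d →
          c < (g : Function.End ℚ) p ∧ (g : Function.End ℚ) p < d := by
        intro p hp1 hp2
        constructor
        · rw [← hgc]; exact hgm hp1
        · rw [← hgd]; exact hgm hp2
      rcases hreg with hr | hr | hr
      · -- interval below α : all of (c,d) lies in W
        have hintW : ∀ p : ℚ, c < p → p < d → p ∈ W := by
          intro p hp1 hp2
          exact Or.inl (lt_trans (show (p:ℝ) < (d:ℝ) by exact_mod_cast hp2) hr)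
        refine ⟨g, hgbij, hgu, hgout, ?_, ?_⟩
        · intro p hp
          by_cases hpc : c < p ∧ p < d
          · exact hintW _ (hin p hpc.1 hpc.2).1 (hin p hpc.1 hpc.2).2
          · rw [hgout p hpc]; exact hp
        · intro p hp
          by_cases hpc : c < p ∧ p < d
          · exact hintW p hpc.1 hpc.2
          · rw [hgout p hpc] at hp; exact hp
      · -- interval above β
        have hintW : ∀ p : ℚ, c < p → p < d → p ∈ W := by
          intro p hp1 hp2
          exact Or.inr (Or.inr (lt_trans hr (by exact_mod_cast hp1)))
        refine ⟨g, hgbij, hgu, hgout, ?_, ?_⟩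
        · intro p hp
          by_cases hpc : c < p ∧ p < d
          · exact hintW _ (hin p hpc.1 hpc.2).1 (hin p hpc.1 hpc.2).2
          · rw [hgout p hpc]; exact hp
        · intro p hp
          by_cases hpc : c < p ∧ p < d
          · exact hintW p hpc.1 hpc.2
          · rw [hgout p hpc] at hp; exact hp
      · -- interval inside (α,β) avoiding x₀ : W misses (c,d) entirely
        have hmiss : ∀ p : ℚ, p ∈ W → ¬(c < p ∧ p < d) := by
          intro p hp hpc
          rcases hp with hp | hp | hp
          · have : (c:ℝ) < (p:ℝ) := by exact_mod_cast hpc.1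
            linarith [hr.1]
          · exact hr.2.2 (hp ▸ hpc)
          · have : (p:ℝ) < (d:ℝ) := by exact_mod_cast hpc.2
            linarith [hr.2.1]
        refine ⟨g, hgbij, hgu, hgout, ?_, ?_⟩
        · intro p hp
          rw [hgout p (hmiss p hp)]; exact hp
        · intro p hp
          by_cases hpc : c < p ∧ p < d
          · exfalso
            exact hmiss _ hp (hin p hpc.1 hpc.2)
          · rw [hgout p hpc] at hp; exact hp
    -- now the case analysis on z
    rcases lt_trichotomy ((z:ℚ):ℝ) α with hz1 | hz1 | hz1
    · -- z below α
      rcases lt_trichotomy y z with hyz | hyz | hyz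
      · obtain ⟨d, hd1, hd2⟩ := exists_rat_btwn hz1
        have hd1' : z < d := by exact_mod_cast hd1
        obtain ⟨g, hgbij, hgu, hgout, hg1, hg2⟩ :=
          hbumpW ((y+z)/2) d (((y+z)/2 + z)/2) z (by linarith) hd1'
            (by linarith) (by linarith) (Or.inl hd2)
        have hgy : (g : Function.End ℚ) y = y := hgout y (by rintro ⟨h1, h2⟩; linarith)
        have hgz := (hGen g hgbij hg1 hg2).mp hgy
        rw [hgu] at hgz
        linarith
      · exact hzy hyz.symm
      · by_cases hyα : (y:ℝ) < α
        · have hzy' : (z:ℝ) < (y:ℝ) := by exact_mod_cast hyz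
          obtain ⟨g, hgbij, hgu, hgout, hg1, hg2⟩ :=
            hbumpW (z-1) ((z+y)/2) (z - 1/2) z (by linarith) (by linarith)
              (by linarith) (by linarith)
              (Or.inl (by push_cast; linarith))
          have hgy : (g : Function.End ℚ) y = y := hgout y (by rintro ⟨h1, h2⟩; linarith)
          have hgz := (hGen g hgbij hg1 hg2).mp hgy
          rw [hgu] at hgz
          linarith
        · obtain ⟨d, hd1, hd2⟩ := exists_rat_btwn hz1
          have hd1' : z < d := by exact_mod_cast hd1
          obtain ⟨g, hgbij, hgu, hgout, hg1, hg2⟩ :=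
            hbumpW (z-1) d ((z-1+z)/2) z (by linarith) hd1' (by linarith) (by linarith)
              (Or.inl hd2)
          have hgy : (g : Function.End ℚ) y = y := by
            refine hgout y ?_
            rintro ⟨h1, h2⟩
            have : (y:ℝ) < (d:ℝ) := by exact_mod_cast h2
            exact hyα (lt_trans this hd2)
          have hgz := (hGen g hgbij hg1 hg2).mp hgy
          rw [hgu] at hgz
          linarith
    · exact hαirr ⟨z, hz1⟩
    · rcases lt_trichotomy ((z:ℚ):ℝ) β with hz2 | hz2 | hz2
      · -- α < z < β
        rcases eq_or_ne z x₀ with hzx | hzx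
        · -- z = x₀ : move y instead
          have hyx : y ≠ x₀ := fun h => hzy (hzx.trans h.symm)
          rcases hyW with hyp | hyp | hyp
          · obtain ⟨d, hd1, hd2⟩ := exists_rat_btwn hyp
            have hd1' : y < d := by exact_mod_cast hd1
            obtain ⟨g, hgbij, hgu, hgout, hg1, hg2⟩ :=
              hbumpW (y-1) d ((y-1+y)/2) y (by linarith) hd1' (by linarith) (by linarith)
                (Or.inl hd2)
            have hgz : (g : Function.End ℚ) z = z := by
              refine hgout z ?_
              rintro ⟨h1, h2⟩
              have : (z:ℝ) < (d:ℝ) := by exact_mod_cast h2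
              rw [hzx] at this
              linarith
            have hgy := (hGen g hgbij hg1 hg2).mpr hgz
            rw [hgu] at hgy
            linarith
          · exact absurd hyp hyx
          · obtain ⟨c, hc1, hc2⟩ := exists_rat_btwn hyp
            have hc2' : c < y := by exact_mod_cast hc2
            obtain ⟨g, hgbij, hgu, hgout, hg1, hg2⟩ :=
              hbumpW c (y+1) ((c+y)/2) y hc2' (by linarith) (by linarith) (by linarith)
                (Or.inr (Or.inl hc1))
            have hgz : (g : Function.End ℚ) z = z := by
              refine hgout z ?_
              rintro ⟨h1, h2⟩
              have : (c:ℝ) < (z:ℝ) := by exact_mod_cast h1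
              rw [hzx] at this
              linarith
            have hgy := (hGen g hgbij hg1 hg2).mpr hgz
            rw [hgu] at hgy
            linarith
        · -- z ≠ x₀ : bump inside (α,β) avoiding x₀, fixing all of W
          rcases lt_or_gt_of_ne hzx with hzx' | hzx'
          · obtain ⟨c, hc1, hc2⟩ := exists_rat_btwn hz1
            have hc2' : c < z := by exact_mod_cast hc2
            obtain ⟨g, hgbij, hgu, hgout, hg1, hg2⟩ :=
              hbumpW c ((z+x₀)/2) ((c+z)/2) z hc2' (by linarith) (by linarith) (by linarith)
                (Or.inr (Or.inr ⟨hc1, by push_cast; linarith, by rintro ⟨h1, h2⟩; linarith⟩))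
            have hgy : (g : Function.End ℚ) y = y := by
              refine hgout y ?_
              rintro ⟨h1, h2⟩
              rcases hyW with hyp | hyp | hyp
              · have : (c:ℝ) < (y:ℝ) := by exact_mod_cast h1
                linarith
              · rw [hyp] at h2; linarith
              · have : (y:ℝ) < ((z+x₀)/2 : ℚ) := by exact_mod_cast h2
                push_cast at this
                linarith
            have hgz := (hGen g hgbij hg1 hg2).mp hgy
            rw [hgu] at hgz
            linarith
          · obtain ⟨d, hd1, hd2⟩ := exists_rat_btwn hz2
            have hd1' : z < d := by exact_mod_cast hd1
            obtain ⟨g, hgbij, hgu, hgout, hg1, hg2⟩ :=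
              hbumpW ((x₀+z)/2) d (((x₀+z)/2 + z)/2) z (by linarith) hd1'
                (by linarith) (by linarith)
                (Or.inr (Or.inr ⟨by push_cast; linarith, hd2, by rintro ⟨h1, h2⟩; linarith⟩))
            have hgy : (g : Function.End ℚ) y = y := by
              refine hgout y ?_
              rintro ⟨h1, h2⟩
              rcases hyW with hyp | hyp | hyp
              · have : ((x₀+z)/2 : ℚ) < (y:ℝ) := by exact_mod_cast h1
                push_cast at this
                linarith
              · rw [hyp] at h1; linarith
              · have : (y:ℝ) < (d:ℝ) := by exact_mod_cast h2
                linarith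
            have hgz := (hGen g hgbij hg1 hg2).mp hgy
            rw [hgu] at hgz
            linarith
      · exact hβirr ⟨z, hz2⟩
      · -- z above β
        rcases lt_trichotomy y z with hyz | hyz | hyz
        · -- y < z
          by_cases hyβ : β < (y:ℝ)
          · have hyz' : (y:ℝ) < (z:ℝ) := by exact_mod_cast hyz
            obtain ⟨g, hgbij, hgu, hgout, hg1, hg2⟩ :=
              hbumpW ((y+z)/2) (z+1) (((y+z)/2 + z)/2) z (by linarith) (by linarith)
                (by linarith) (by linarith)
                (Or.inr (Or.inl (by push_cast; linarith)))
            have hgy : (g : Function.End ℚ) y = y := hgout y (by rintro ⟨h1, h2⟩; linarith)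
            have hgz := (hGen g hgbij hg1 hg2).mp hgy
            rw [hgu] at hgz
            linarith
          · obtain ⟨c, hc1, hc2⟩ := exists_rat_btwn hz2
            have hc2' : c < z := by exact_mod_cast hc2
            obtain ⟨g, hgbij, hgu, hgout, hg1, hg2⟩ :=
              hbumpW c (z+1) ((c+z)/2) z hc2' (by linarith) (by linarith) (by linarith)
                (Or.inr (Or.inl hc1))
            have hgy : (g : Function.End ℚ) y = y := by
              refine hgout y ?_
              rintro ⟨h1, h2⟩
              have : (c:ℝ) < (y:ℝ) := by exact_mod_cast h1
              exact hyβ (lt_trans hc1 this)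
            have hgz := (hGen g hgbij hg1 hg2).mp hgy
            rw [hgu] at hgz
            linarith
        · exact hzy hyz.symm
        · -- z < y
          obtain ⟨c, hc1, hc2⟩ := exists_rat_btwn hz2
          have hc2' : c < z := by exact_mod_cast hc2
          obtain ⟨g, hgbij, hgu, hgout, hg1, hg2⟩ :=
            hbumpW c ((z+y)/2) ((c+z)/2) z hc2' (by linarith) (by linarith) (by linarith)
              (Or.inr (Or.inl hc1))
          have hgy : (g : Function.End ℚ) y = y := hgout y (by rintro ⟨h1, h2⟩; linarith)
          have hgz := (hGen g hgbij hg1 hg2).mp hgy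
          rw [hgu] at hgz
          linarith
  -- Step 2 : m fixes W pointwise, so ξ m fixes the range of ξ w = w, in particular x₀
  have hmw : m * w = w := by
    apply Subtype.ext
    rw [Submonoid.coe_mul]
    funext q
    show (m : Function.End ℚ) ((w : Function.End ℚ) q) = (w : Function.End ℚ) q
    apply hm
    rcases hwmem q with h | h | h
    · left
      have : (((w : Function.End ℚ) q : ℚ) : ℝ) < (a:ℝ) := lt_trans h hαa
      exact le_of_lt (by exact_mod_cast this)
    · right; left; exact h
    · right; right
      have : (b:ℝ) < (((w : Function.End ℚ) q : ℚ) : ℝ) := lt_trans hbβ h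
      exact le_of_lt (by exact_mod_cast this)
  have hxi := congrArg ξ hmw
  rw [map_mul] at hxi
  have hxi2 := congrArg Subtype.val hxi
  rw [Submonoid.coe_mul] at hxi2
  have hq := congrFun hxi2 ((iso.symm ⟨x₀, hx₀W⟩ : ℚ))
  simp only [end_mul_apply] at hq
  have hwq : (w : Function.End ℚ) ((iso.symm ⟨x₀, hx₀W⟩ : ℚ)) = x₀ :=
    congrArg Subtype.val (iso.apply_symm_apply ⟨x₀, hx₀W⟩)
  rw [hPhiW, hwq] at hq
  exact hq

end Xi
end FixAux

open FixAux in
theorem fixes_M_of_fixes_G (ξ : Mmon →* Emon) (hinj : Function.Injective ξ)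
    (hfix : ∀ f : Mmon, Function.Bijective (f : Function.End ℚ) →
      (ξ f : Function.End ℚ) = (f : Function.End ℚ)) :
    ∀ f : Mmon, (ξ f : Function.End ℚ) = (f : Function.End ℚ) := by
  intro f
  funext x₀
  have hF : StrictMono (f : Function.End ℚ) := f.2
  set F : ℚ → ℚ := (f : Function.End ℚ) with hFdef
  set a : ℚ := x₀ - 1 with hadef
  set b : ℚ := x₀ + 1 with hbdef
  have hax : a < x₀ := by rw [hadef]; linarith
  have hxb : x₀ < b := by rw [hbdef]; linarith
  have hab : a < b := lt_trans hax hxb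
  have hxa1 : x₀ - a = 1 := by rw [hadef]; ring
  have hbx1 : b - x₀ = 1 := by rw [hbdef]; ring
  have hs1 : 0 < F x₀ - F a := sub_pos.mpr (hF hax)
  have hs2 : 0 < F b - F x₀ := sub_pos.mpr (hF hxb)
  have hFab : F a < F b := hF hab
  -- the middle factor n : identity on (a,b)
  set nf : ℚ → ℚ := fun x =>
    if x ≤ a then a + (F x - F a) else if x < b then x else b + (F x - F b) with hnf
  have hn_lo : ∀ x, x ≤ a → nf x = a + (F x - F a) := by
    intro x hx; simp only [hnf]; rw [if_pos hx]
  have hn_mid : ∀ x, a < x → x < b → nf x = x := by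
    intro x h1 h2; simp only [hnf]; rw [if_neg (not_le.mpr h1), if_pos h2]
  have hn_hi : ∀ x, b ≤ x → nf x = b + (F x - F b) := by
    intro x hx; simp only [hnf]
    rw [if_neg (not_le.mpr (lt_of_lt_of_le hab hx)), if_neg (not_lt.mpr hx)]
  have hnmono : StrictMono nf := by
    intro p q hpq
    rcases le_or_gt p a with hp | hp
    · rw [hn_lo p hp]
      have hFpa : F p ≤ F a := hF.le_iff_le.mpr hp
      rcases le_or_gt q a with hq | hq
      · rw [hn_lo q hq]
        have := hF hpq
        linarith
      rcases lt_or_ge q b with hqb | hqb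
      · rw [hn_mid q hq hqb]; linarith
      · rw [hn_hi q hqb]
        have : F b ≤ F q := hF.le_iff_le.mpr hqb
        linarith
    · rcases lt_or_ge p b with hpb | hpb
      · rw [hn_mid p hp hpb]
        rcases lt_or_ge q b with hqb | hqb
        · rw [hn_mid q (lt_trans hp hpq) hqb]; exact hpq
        · rw [hn_hi q hqb]
          have : F b ≤ F q := hF.le_iff_le.mpr hqb
          linarith
      · rw [hn_hi p hpb, hn_hi q (le_trans hpb (le_of_lt hpq))]
        have := hF hpq
        linarith
  set n : Mmon := (⟨nf, hnmono⟩ : Mmon) with hndef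
  -- k : equal to F on (a,b), translation outside
  set kf : ℚ → ℚ := fun x =>
    if x ≤ a then F a + (x - a) else if x < b then F x else F b + (x - b) with hkf
  have hk_lo : ∀ x, x ≤ a → kf x = F a + (x - a) := by
    intro x hx; simp only [hkf]; rw [if_pos hx]
  have hk_mid : ∀ x, a < x → x < b → kf x = F x := by
    intro x h1 h2; simp only [hkf]; rw [if_neg (not_le.mpr h1), if_pos h2]
  have hk_hi : ∀ x, b ≤ x → kf x = F b + (x - b) := by
    intro x hx; simp only [hkf]
    rw [if_neg (not_le.mpr (lt_of_lt_of_le hab hx)), if_neg (not_lt.mpr hx)]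
  have hkmono : StrictMono kf := by
    intro p q hpq
    rcases le_or_gt p a with hp | hp
    · rw [hk_lo p hp]
      rcases le_or_gt q a with hq | hq
      · rw [hk_lo q hq]; linarith
      rcases lt_or_ge q b with hqb | hqb
      · rw [hk_mid q hq hqb]
        have := hF hq
        linarith
      · rw [hk_hi q hqb]; linarith
    · rcases lt_or_ge p b with hpb | hpb
      · rw [hk_mid p hp hpb]
        rcases lt_or_ge q b with hqb | hqb
        · rw [hk_mid q (lt_trans hp hpq) hqb]
          exact hF hpq
        · rw [hk_hi q hqb]
          have : F p < F b := hF hpb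
          linarith
      · rw [hk_hi p hpb, hk_hi q (le_trans hpb (le_of_lt hpq))]; linarith
  set k : Mmon := (⟨kf, hkmono⟩ : Mmon) with hkdef
  -- g : the piecewise-linear automorphism agreeing with k outside (a,b) and at x₀
  set gf : ℚ → ℚ := fun x =>
    if x ≤ a then x + (F a - a)
    else if x ≤ x₀ then F a + (x - a) * (F x₀ - F a)
    else if x ≤ b then F x₀ + (x - x₀) * (F b - F x₀)
    else x + (F b - b) with hgf
  have hg_1 : ∀ x, x ≤ a → gf x = x + (F a - a) := by
    intro x hx; simp only [hgf]; rw [if_pos hx]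
  have hg_2 : ∀ x, a < x → x ≤ x₀ → gf x = F a + (x - a) * (F x₀ - F a) := by
    intro x h1 h2; simp only [hgf]; rw [if_neg (not_le.mpr h1), if_pos h2]
  have hg_3 : ∀ x, x₀ < x → x ≤ b → gf x = F x₀ + (x - x₀) * (F b - F x₀) := by
    intro x h1 h2; simp only [hgf]
    rw [if_neg (not_le.mpr (lt_trans hax h1)), if_neg (not_le.mpr h1), if_pos h2]
  have hg_4 : ∀ x, b < x → gf x = x + (F b - b) := by
    intro x hx; simp only [hgf]
    rw [if_neg (not_le.mpr (lt_trans hab hx)), if_neg (not_le.mpr (lt_trans hxb hx)),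
      if_neg (not_le.mpr hx)]
  have hgB2 : ∀ x, a < x → x ≤ x₀ → F a < gf x ∧ gf x ≤ F x₀ := by
    intro x h1 h2
    rw [hg_2 x h1 h2]
    constructor
    · nlinarith [mul_pos (sub_pos.mpr h1) hs1]
    · nlinarith [mul_le_mul_of_nonneg_right (show x - a ≤ x₀ - a by linarith) (le_of_lt hs1)]
  have hgB3 : ∀ x, x₀ < x → x ≤ b → F x₀ < gf x ∧ gf x ≤ F b := by
    intro x h1 h2
    rw [hg_3 x h1 h2]
    constructor
    · nlinarith [mul_pos (sub_pos.mpr h1) hs2]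
    · nlinarith [mul_le_mul_of_nonneg_right (show x - x₀ ≤ b - x₀ by linarith) (le_of_lt hs2)]
  have hgmono : StrictMono gf := by
    intro p q hpq
    rcases le_or_gt p a with hp | hp
    · rw [hg_1 p hp]
      rcases le_or_gt q a with hq | hq
      · rw [hg_1 q hq]; linarith
      rcases le_or_gt q x₀ with hqx | hqx
      · have := (hgB2 q hq hqx).1; linarith
      rcases le_or_gt q b with hqb | hqb
      · have := (hgB3 q hqx hqb).1
        have h2 : F a < F x₀ := by linarith
        linarith
      · rw [hg_4 q hqb]; linarith
    rcases le_or_gt p x₀ with hpx | hpx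
    · rcases le_or_gt q x₀ with hqx | hqx
      · rw [hg_2 p hp hpx, hg_2 q (lt_trans hp hpq) hqx]
        nlinarith [mul_lt_mul_of_pos_right (show p - a < q - a by linarith) hs1]
      rcases le_or_gt q b with hqb | hqb
      · have := (hgB2 p hp hpx).2
        have h2 := (hgB3 q hqx hqb).1
        linarith
      · rw [hg_4 q hqb]
        have := (hgB2 p hp hpx).2
        have h3 : F x₀ ≤ F b := by linarith
        linarith
    rcases le_or_gt p b with hpb | hpb
    · rcases le_or_gt q b with hqb | hqb
      · rw [hg_3 p hpx hpb, hg_3 q (lt_trans hpx hpq) hqb]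
        nlinarith [mul_lt_mul_of_pos_right (show p - x₀ < q - x₀ by linarith) hs2]
      · rw [hg_4 q hqb]
        have := (hgB3 p hpx hpb).2
        linarith
    · rw [hg_4 p hpb, hg_4 q (lt_trans hpb hpq)]; linarith
  set g : Mmon := (⟨gf, hgmono⟩ : Mmon) with hgdef
  have hgsurj : Function.Surjective gf := by
    intro y
    rcases le_or_gt y (F a) with hy | hy
    · refine ⟨y - (F a - a), ?_⟩
      rw [hg_1 _ (by linarith)]; ring
    rcases le_or_gt y (F x₀) with hy2 | hy2
    · refine ⟨a + (y - F a) / (F x₀ - F a), ?_⟩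
      have hd : (0:ℚ) < (y - F a) / (F x₀ - F a) := div_pos (by linarith) hs1
      have hd2 : (y - F a) / (F x₀ - F a) ≤ 1 := (div_le_one hs1).mpr (by linarith)
      rw [hg_2 _ (by linarith) (by linarith)]
      rw [add_sub_cancel_left, div_mul_cancel₀ _ (ne_of_gt hs1)]
      ring
    rcases le_or_gt y (F b) with hy3 | hy3
    · refine ⟨x₀ + (y - F x₀) / (F b - F x₀), ?_⟩
      have hd : (0:ℚ) < (y - F x₀) / (F b - F x₀) := div_pos (by linarith) hs2
      have hd2 : (y - F x₀) / (F b - F x₀) ≤ 1 := (div_le_one hs2).mpr (by linarith)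
      rw [hg_3 _ (by linarith) (by linarith)]
      rw [add_sub_cancel_left, div_mul_cancel₀ _ (ne_of_gt hs2)]
      ring
    · refine ⟨y - (F b - b), ?_⟩
      rw [hg_4 _ (by linarith)]; ring
  have hgbij : Function.Bijective (g : Function.End ℚ) := ⟨hgmono.injective, hgsurj⟩
  -- m : k composed with the inverse of g ; fixes (-∞,a], x₀, [b,∞)
  set mf : ℚ → ℚ := fun x =>
    if x ≤ a then x
    else if x ≤ x₀ then a + (F x - F a) / (F x₀ - F a)
    else if x < b then x₀ + (F x - F x₀) / (F b - F x₀)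
    else x with hmf
  have hm_1 : ∀ x, x ≤ a → mf x = x := by
    intro x hx; simp only [hmf]; rw [if_pos hx]
  have hm_2 : ∀ x, a < x → x ≤ x₀ → mf x = a + (F x - F a) / (F x₀ - F a) := by
    intro x h1 h2; simp only [hmf]; rw [if_neg (not_le.mpr h1), if_pos h2]
  have hm_3 : ∀ x, x₀ < x → x < b → mf x = x₀ + (F x - F x₀) / (F b - F x₀) := by
    intro x h1 h2; simp only [hmf]
    rw [if_neg (not_le.mpr (lt_trans hax h1)), if_neg (not_le.mpr h1), if_pos h2]
  have hm_4 : ∀ x, b ≤ x → mf x = x := by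
    intro x hx; simp only [hmf]
    rw [if_neg (not_le.mpr (lt_of_lt_of_le hab hx)),
      if_neg (not_le.mpr (lt_of_lt_of_le hxb hx)), if_neg (not_lt.mpr hx)]
  have hmB2 : ∀ x, a < x → x ≤ x₀ → a < mf x ∧ mf x ≤ x₀ := by
    intro x h1 h2
    rw [hm_2 x h1 h2]
    have hFx : F a < F x := hF h1
    have hFx2 : F x ≤ F x₀ := hF.le_iff_le.mpr h2
    constructor
    · have := div_pos (by linarith : (0:ℚ) < F x - F a) hs1
      linarith
    · have := (div_le_one hs1).mpr (by linarith : F x - F a ≤ F x₀ - F a)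
      linarith
  have hmB3 : ∀ x, x₀ < x → x < b → x₀ < mf x ∧ mf x < b := by
    intro x h1 h2
    rw [hm_3 x h1 h2]
    have hFx : F x₀ < F x := hF h1
    have hFx2 : F x < F b := hF h2
    constructor
    · have := div_pos (by linarith : (0:ℚ) < F x - F x₀) hs2
      linarith
    · have := (div_lt_one hs2).mpr (by linarith : F x - F x₀ < F b - F x₀)
      linarith
  have hmmono : StrictMono mf := by
    intro p q hpq
    rcases le_or_gt p a with hp | hp
    · rw [hm_1 p hp]
      rcases le_or_gt q a with hq | hq
      · rw [hm_1 q hq]; exact hpq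
      rcases le_or_gt q x₀ with hqx | hqx
      · have := (hmB2 q hq hqx).1; linarith
      rcases lt_or_ge q b with hqb | hqb
      · have := (hmB3 q hqx hqb).1; linarith
      · rw [hm_4 q hqb]; linarith
    rcases le_or_gt p x₀ with hpx | hpx
    · rcases le_or_gt q x₀ with hqx | hqx
      · rw [hm_2 p hp hpx, hm_2 q (lt_trans hp hpq) hqx]
        have := div_lt_div_of_pos_right (show F p - F a < F q - F a by linarith [hF hpq]) hs1
        linarith
      rcases lt_or_ge q b with hqb | hqb
      · have h1 := (hmB2 p hp hpx).2
        have h2 := (hmB3 q hqx hqb).1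
        linarith
      · rw [hm_4 q hqb]
        have := (hmB2 p hp hpx).2
        linarith
    rcases lt_or_ge p b with hpb | hpb
    · rcases lt_or_ge q b with hqb | hqb
      · rw [hm_3 p hpx hpb, hm_3 q (lt_trans hpx hpq) hqb]
        have := div_lt_div_of_pos_right (show F p - F x₀ < F q - F x₀ by linarith [hF hpq]) hs2
        linarith
      · rw [hm_4 q hqb]
        have := (hmB3 p hpx hpb).2
        linarith
    · rw [hm_4 p hpb, hm_4 q (le_trans hpb (le_of_lt hpq))]
      exact hpq
  set m : Mmon := (⟨mf, hmmono⟩ : Mmon) with hmdef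
  -- the three decomposition identities
  have hfkn : f = k * n := by
    apply Subtype.ext
    rw [Submonoid.coe_mul]
    funext x
    show F x = kf (nf x)
    rcases le_or_gt x a with hx | hx
    · rw [hn_lo x hx]
      have hFxa : F x ≤ F a := hF.le_iff_le.mpr hx
      rw [hk_lo _ (by linarith)]
      ring
    rcases lt_or_ge x b with hxb' | hxb'
    · rw [hn_mid x hx hxb', hk_mid x hx hxb']
    · rw [hn_hi x hxb']
      have hFxb : F b ≤ F x := hF.le_iff_le.mpr hxb'
      rw [hk_hi _ (by linarith)]
      ring
  have hkgm : k = g * m := by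
    apply Subtype.ext
    rw [Submonoid.coe_mul]
    funext x
    show kf x = gf (mf x)
    rcases le_or_gt x a with hx | hx
    · rw [hm_1 x hx, hg_1 x hx, hk_lo x hx]; ring
    rcases le_or_gt x x₀ with hxx | hxx
    · rw [hk_mid x hx (by linarith)]
      have hB := hmB2 x hx hxx
      rw [hg_2 _ hB.1 hB.2, hm_2 x hx hxx]
      rw [add_sub_cancel_left, div_mul_cancel₀ _ (ne_of_gt hs1)]
      ring
    rcases lt_or_ge x b with hxb' | hxb'
    · rw [hk_mid x hx hxb']
      have hB := hmB3 x hxx hxb'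
      rw [hg_3 _ hB.1 (le_of_lt hB.2), hm_3 x hxx hxb']
      rw [add_sub_cancel_left, div_mul_cancel₀ _ (ne_of_gt hs2)]
      ring
    · rw [hm_4 x hxb', hk_hi x hxb']
      rcases eq_or_lt_of_le hxb' with hxe | hxe
      · rw [hg_3 x (by linarith) (by linarith)]
        rw [← hxe]
        have : (b - x₀) = 1 := hbx1
        rw [this]
        ring
      · rw [hg_4 x hxe]; ring
  -- pinning the value of ξ n at x₀
  have hnpin : ((ξ n : Emon) : Function.End ℚ) x₀ = x₀ := by
    refine pin_interval ξ hinj hfix n a b x₀ hax hxb ?_ ?_ ?_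
    · intro x h1 h2; exact hn_mid x h1 h2
    · intro x hx
      rw [show ((n : Function.End ℚ) x) = nf x from rfl, hn_lo x hx]
      have : F x ≤ F a := hF.le_iff_le.mpr hx
      linarith
    · intro x hx
      rw [show ((n : Function.End ℚ) x) = nf x from rfl, hn_hi x hx]
      have : F b ≤ F x := hF.le_iff_le.mpr hx
      linarith
  -- pinning the value of ξ m at x₀
  have hmpin : ((ξ m : Emon) : Function.End ℚ) x₀ = x₀ := by
    refine pin_point ξ hinj hfix m a b x₀ hax hxb ?_
    intro x hx
    rcases hx with hx | hx | hx
    · exact hm_1 x hx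
    · rw [hx]
      show mf x₀ = x₀
      rw [hm_2 x₀ hax le_rfl, div_self (ne_of_gt hs1)]
      rw [hadef]; ring
    · exact hm_4 x hx
  -- assemble
  have h1 : ξ f = ξ k * ξ n := by rw [hfkn, map_mul]
  have h2 := congrArg Subtype.val h1
  rw [Submonoid.coe_mul] at h2
  have h3 := congrFun h2 x₀
  rw [end_mul_apply, hnpin] at h3
  have h4 : ξ k = ξ g * ξ m := by rw [← map_mul, ← hkgm]
  have h5 := congrArg Subtype.val h4
  rw [Submonoid.coe_mul, hfix g hgbij] at h5
  have h6 := congrFun h5 x₀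
  rw [end_mul_apply, hmpin] at h6
  rw [h3, h6]
  show gf x₀ = F x₀
  rw [hg_2 x₀ hax le_rfl, hxa1]
  ring
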